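/- In the local setting, assume L/K is unramified, i.e. the maximal ideal of A generates the maximal ideal of B, with uniformizer π ∈ A, and let F = B/πB. For every square-free B-lattice Λ in (V,H) with B-basis (b₁,…,b_n), the π-adic valuation of det((H(b_i,b_j))_{i,j}) is congruent modulo 2 to dim_F(Λ*/Λ). -/

import Mathlib

set_option maxHeartbeats 2000000 in
open Matrix in
lemma matrix_det_eq_unit_mul_pow
    {B : Type} [CommRing B] [IsDomain B] [IsDiscreteValuationRing B]
    (π : B) (hmax : Ideal.span {π} = IsLocalRing.maximalIdeal B)
    {n d : ℕ} (g : Matrix (Fin n) (Fin n) B)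
    (N : Submodule B (Fin n → B))
    (hN : N = Submodule.span B (Set.range fun i => g i))
    (hπ : ∀ x : Fin n → B, π • x ∈ N)
    (w : Fin d → (Fin n → B))
    (hspan : ∀ x : Fin n → B, ∃ c : Fin d → B, x - ∑ i, c i • w i ∈ N)
    (hind : ∀ c : Fin d → B, (∑ i, c i • w i) ∈ N → ∀ i, c i ∈ Ideal.span {π}) :
    ∃ u : B, IsUnit u ∧ g.det = u * π ^ d := by
  classical
  have hπ0 : π ≠ 0 := by
    intro h
    apply IsDiscreteValuationRing.not_a_field B
    rw [← hmax, h]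
    exact Ideal.span_singleton_eq_bot.mpr rfl
  letI : (Ideal.span ({π} : Set B)).IsMaximal := hmax ▸ IsLocalRing.maximalIdeal.isMaximal B
  set I : Ideal B := Ideal.span ({π} : Set B) with hI
  letI : Field (B ⧸ I) := Ideal.Quotient.field I
  set r : B →+* B ⧸ I := Ideal.Quotient.mk I with hr
  set q : (Fin n → B) → (Fin n → B ⧸ I) := fun x j => r (x j) with hq
  -- basic properties of q
  have q_sum : ∀ (k : ℕ) (c : Fin k → B) (v : Fin k → (Fin n → B)),
      q (∑ i, c i • v i) = ∑ i, r (c i) • q (v i) := by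
    intro k c v
    funext j
    simp only [hq, Finset.sum_apply, Pi.smul_apply, smul_eq_mul, map_sum, _root_.map_mul]
  have q_zero_mem : ∀ x : Fin n → B, q x = 0 → x ∈ N := by
    intro x hx
    have : ∀ j, ∃ z, x j = π * z := by
      intro j
      have : r (x j) = 0 := congrFun hx j
      rw [hr, Ideal.Quotient.eq_zero_iff_mem, hI, Ideal.mem_span_singleton] at this
      exact this
    choose z hz using this
    have : x = π • z := funext fun j => by rw [hz j]; rfl
    rw [this]
    exact hπ z
  have q_surj : ∀ y : Fin n → B ⧸ I, ∃ x, q x = y := by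
    intro y
    choose x hx using fun j => Ideal.Quotient.mk_surjective (y j)
    exact ⟨x, funext hx⟩
  -- the key reduction
  have crux : ∀ (c : Fin d → B) (ν : Fin n → B), ν ∈ N →
      q (∑ i, c i • w i) = q ν → ∀ i, c i ∈ I := by
    intro c ν hν hqc
    apply hind
    have h0 : q (∑ i, c i • w i - ν) = 0 := by
      funext j
      have h2 := congrFun hqc j
      simp only [hq] at h2
      show r ((∑ i, c i • w i) j) - r (ν j) = (0 : Fin n → B ⧸ I) j
      rw [h2, Pi.zero_apply, sub_self]
    have := q_zero_mem _ h0
    have : (∑ i, c i • w i - ν) + ν ∈ N := N.add_mem this hν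
    simpa using this
  set qw : Fin d → (Fin n → B ⧸ I) := fun i => q (w i) with hqw
  have hqwli : LinearIndependent (B ⧸ I) qw := by
    rw [Fintype.linearIndependent_iff]
    intro gc hgc i
    choose c hc using fun i => Ideal.Quotient.mk_surjective (gc i)
    have : q (∑ i, c i • w i) = q 0 := by
      rw [q_sum]
      have : q 0 = 0 := by funext j; simp [hq]
      rw [this, ← hgc]
      exact Finset.sum_congr rfl fun i _ => by rw [hc]
    have hmem := crux c 0 N.zero_mem this
    rw [← hc i, Ideal.Quotient.eq_zero_iff_mem]
    exact hmem i
  -- image of N mod π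
  set NqSub : Submodule (B ⧸ I) (Fin n → B ⧸ I) :=
    { carrier := q '' (N : Set (Fin n → B))
      add_mem' := by
        rintro _ _ ⟨x, hx, rfl⟩ ⟨y, hy, rfl⟩
        exact ⟨x + y, N.add_mem hx hy, by funext j; simp [hq]⟩
      zero_mem' := ⟨0, N.zero_mem, by funext j; simp [hq]⟩
      smul_mem' := by
        rintro a _ ⟨x, hx, rfl⟩
        obtain ⟨c, hc⟩ := Ideal.Quotient.mk_surjective a
        exact ⟨c • x, N.smul_mem c hx, by funext j; simp [hq, hr, ← hc, Algebra.algebraMap_self]⟩ } with hNq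
  set m := Module.finrank (B ⧸ I) ↥NqSub with hm
  set β : Module.Basis (Fin m) (B ⧸ I) ↥NqSub := Module.finBasis _ _ with hβ
  have hβmem : ∀ j, ((β j : Fin n → B ⧸ I)) ∈ q '' (N : Set (Fin n → B)) := fun j => (β j).2
  choose w' hw'N hw'q using hβmem
  set U : Fin d ⊕ Fin m → (Fin n → B) := Sum.elim w w' with hU
  set qU : Fin d ⊕ Fin m → (Fin n → B ⧸ I) := fun i => q (U i) with hqU
  have hqUinr : ∀ j, qU (Sum.inr j) = (β j : Fin n → B ⧸ I) := fun j => hw'q j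
  have hqUli : LinearIndependent (B ⧸ I) qU := by
    rw [linearIndependent_sum]
    refine ⟨hqwli, ?_, ?_⟩
    · have h4 : qU ∘ Sum.inr = (NqSub.subtype ∘ β) := funext fun j => hqUinr j
      rw [h4]
      exact β.linearIndependent.map' NqSub.subtype (Submodule.ker_subtype _)
    · rw [Submodule.disjoint_def]
      intro x hx1 hx2
      have hx2' : x ∈ NqSub := by
        refine Submodule.span_le.mpr ?_ hx2
        rintro _ ⟨j, rfl⟩
        rw [Function.comp_apply, hqUinr]
        exact (β j).2
      obtain ⟨ν, hν, hνx⟩ := hx2'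
      obtain ⟨gc, hgc⟩ := (Submodule.mem_span_range_iff_exists_fun _).mp hx1
      choose c hc using fun i => Ideal.Quotient.mk_surjective (gc i)
      have h5 : q (∑ i, c i • w i) = q ν := by
        rw [q_sum, hνx]
        rw [← hgc]
        exact Finset.sum_congr rfl fun i _ => by rw [hc]; rfl
      have h6 := crux c ν hν h5
      have h7 : ∀ i, gc i = 0 := fun i => by
        rw [← hc i, Ideal.Quotient.eq_zero_iff_mem]; exact h6 i
      rw [← hgc]
      simp [h7]
  have hNqle : ∀ x ∈ NqSub, x ∈ Submodule.span (B ⧸ I) (Set.range qU) := by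
    intro x hx
    have h3 : (⟨x, hx⟩ : ↥NqSub) = ∑ j, β.repr ⟨x, hx⟩ j • β j := (β.sum_repr ⟨x, hx⟩).symm
    have h4 : x = ∑ j, β.repr ⟨x, hx⟩ j • (qU (Sum.inr j)) := by
      have := congrArg (Submodule.subtype NqSub) h3
      simp only [Submodule.coe_subtype, map_sum, _root_.map_smul] at this
      simpa [hqUinr] using this
    rw [h4]
    exact Submodule.sum_mem _ fun j _ =>
      Submodule.smul_mem _ _ (Submodule.subset_span ⟨Sum.inr j, rfl⟩)
  have hqUspan : ⊤ ≤ Submodule.span (B ⧸ I) (Set.range qU) := by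
    intro y _
    obtain ⟨x, hx⟩ := q_surj y
    obtain ⟨c, hc⟩ := hspan x
    have h8 : y = (∑ i, r (c i) • qU (Sum.inl i)) + q (x - ∑ i, c i • w i) := by
      rw [← hx]
      have : q x = q ((∑ i, c i • w i) + (x - ∑ i, c i • w i)) := by ring_nf
      rw [this]
      have hadd : ∀ a b : Fin n → B, q (a + b) = q a + q b := by
        intro a b; funext j; simp [hq]
      rw [hadd, q_sum]
      rfl
    rw [h8]
    refine Submodule.add_mem _ (Submodule.sum_mem _ fun i _ =>
      Submodule.smul_mem _ _ (Submodule.subset_span ⟨Sum.inl i, rfl⟩)) ?_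
    exact hNqle _ ⟨x - ∑ i, c i • w i, hc, rfl⟩
  set bFn : Module.Basis (Fin d ⊕ Fin m) (B ⧸ I) (Fin n → B ⧸ I) := Module.Basis.mk hqUli hqUspan with hbFn
  have hdm : d + m = n := by
    have h1 := Module.finrank_eq_card_basis bFn
    rw [Module.finrank_pi] at h1
    simpa using h1.symm
  set ε : (Fin d ⊕ Fin m) ≃ Fin n := finSumFinEquiv.trans (finCongr hdm) with hε
  set u_ : Fin n → (Fin n → B) := fun j => U (ε.symm j) with hu_
  set E : Matrix (Fin n) (Fin n) B := Matrix.of u_ with hE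
  have hqEdet : (E.map r).det ≠ 0 := by
    intro h0
    obtain ⟨v, hv0, hv⟩ := Matrix.exists_vecMul_eq_zero_iff.mpr h0
    have hli2 : LinearIndependent (B ⧸ I) (fun j => qU (ε.symm j)) :=
      hqUli.comp ε.symm ε.symm.injective
    have h15 : (∑ j, v j • qU (ε.symm j)) = 0 := by
      funext j'
      rw [Finset.sum_apply]
      have h16 := congrFun hv j'
      simp only [Matrix.vecMul, dotProduct, Matrix.map_apply, Pi.zero_apply] at h16
      simp only [Pi.zero_apply]
      rw [← h16]
      exact Finset.sum_congr rfl fun j _ => rfl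
    exact hv0 (funext (Fintype.linearIndependent_iff.mp hli2 v h15))
  have hEunit : IsUnit E.det := by
    by_contra hc
    have h10 : E.det ∈ I := by
      rw [hmax]
      exact (IsLocalRing.mem_maximalIdeal _).mpr hc
    have h11 : r E.det = 0 := Ideal.Quotient.eq_zero_iff_mem.mpr h10
    apply hqEdet
    have h12 := (RingHom.map_det r E).symm
    rw [RingHom.mapMatrix_apply] at h12
    rw [h12, h11]
  have hEinv : E⁻¹ * E = 1 := Matrix.nonsing_inv_mul E hEunit
  have hrepr : ∀ x : Fin n → B, x = ∑ j, (Matrix.vecMul x E⁻¹) j • u_ j := by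
    intro x
    funext j'
    have h11 : Matrix.vecMul (Matrix.vecMul x E⁻¹) E = x := by
      rw [Matrix.vecMul_vecMul, hEinv, Matrix.vecMul_one]
    rw [Finset.sum_apply]
    conv_lhs => rw [← h11]
    simp only [Matrix.vecMul, dotProduct, Pi.smul_apply, smul_eq_mul]
    exact Finset.sum_congr rfl fun j _ => rfl
  have hC3 : ∀ x ∈ N, ∀ l : Fin d, (Matrix.vecMul x E⁻¹) (ε (Sum.inl l)) ∈ I := by
    intro x hx l
    set a : Fin n → B := Matrix.vecMul x E⁻¹ with ha
    have hqx : q x ∈ NqSub := ⟨x, hx, rfl⟩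
    have h12 : q x = ∑ i : Fin d ⊕ Fin m, r (a (ε i)) • qU i := by
      have h12a : q x = ∑ j, r (a j) • qU (ε.symm j) := by
        have h12b := congrArg q (hrepr x)
        rw [q_sum] at h12b
        exact h12b
      rw [h12a]
      exact (Fintype.sum_equiv ε _ _ (fun i => by rw [Equiv.symm_apply_apply])).symm
    have h13 : q x = ∑ k, (β.repr ⟨q x, hqx⟩ k) • qU (Sum.inr k) := by
      have h3 : (⟨q x, hqx⟩ : ↥NqSub) = ∑ k, β.repr ⟨q x, hqx⟩ k • β k :=
        (β.sum_repr ⟨q x, hqx⟩).symm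
      have h4 := congrArg (Submodule.subtype NqSub) h3
      simp only [Submodule.coe_subtype, map_sum, _root_.map_smul] at h4
      simpa [hqUinr] using h4
    have h13' : q x = ∑ i : Fin d ⊕ Fin m,
        (Sum.elim (fun _ => (0 : B ⧸ I)) (fun k => β.repr ⟨q x, hqx⟩ k)) i • qU i := by
      rw [Fintype.sum_sum_type]
      simp only [Sum.elim_inl, Sum.elim_inr, zero_smul, Finset.sum_const_zero, zero_add]
      exact h13
    have h14 := Fintype.linearIndependent_iff.mp hqUli
      (fun i => r (a (ε i)) - Sum.elim (fun _ => (0 : B ⧸ I)) (fun k => β.repr ⟨q x, hqx⟩ k) i)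
      (by
        simp only [sub_smul]
        rw [Finset.sum_sub_distrib, ← h12, ← h13', sub_self])
    have h17 := h14 (Sum.inl l)
    simp only [Sum.elim_inl, sub_zero] at h17
    exact Ideal.Quotient.eq_zero_iff_mem.mp h17
  set dco : Fin n → B := fun j => Sum.elim (fun _ => π) (fun _ => (1 : B)) (ε.symm j) with hdco
  set FM : Matrix (Fin n) (Fin n) B := Matrix.diagonal dco * E with hFM
  have hFMrow : ∀ j, FM j = dco j • u_ j := by
    intro j
    funext j'
    show (Matrix.diagonal dco * E) j j' = dco j * u_ j j'
    rw [Matrix.diagonal_mul]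
    rfl
  have hFMmem : ∀ j, FM j ∈ N := by
    intro j
    rw [hFMrow]
    rcases hs : ε.symm j with l | k
    · have h18 : dco j • u_ j = π • w l := by
        simp only [hdco, hu_, hs, Sum.elim_inl, hU]
      rw [h18]
      exact hπ _
    · have h18 : dco j • u_ j = (1 : B) • w' k := by
        simp only [hdco, hu_, hs, Sum.elim_inr, hU]
      rw [h18, one_smul]
      exact hw'N k
  have hNle : ∀ x ∈ N, x ∈ Submodule.span B (Set.range fun j => FM j) := by
    intro x hx
    rw [hrepr x]
    apply Submodule.sum_mem
    intro j _
    rcases hs : ε.symm j with l | k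
    · have hj : ε (Sum.inl l) = j := by rw [← hs, Equiv.apply_symm_apply]
      have hdiv := hC3 x hx l
      rw [hj, hI, Ideal.mem_span_singleton] at hdiv
      obtain ⟨t, ht⟩ := hdiv
      have hd : dco j = π := by simp [hdco, hs]
      have h19 : (Matrix.vecMul x E⁻¹) j • u_ j = t • FM j := by
        rw [hFMrow, ht, hd, smul_smul, mul_comm]
      rw [h19]
      exact Submodule.smul_mem _ _ (Submodule.subset_span ⟨j, rfl⟩)
    · have hd : dco j = 1 := by simp [hdco, hs]
      have h19 : u_ j = FM j := by rw [hFMrow, hd, one_smul]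
      rw [h19]
      exact Submodule.smul_mem _ _ (Submodule.subset_span ⟨j, rfl⟩)
  have hspanFM : Submodule.span B (Set.range fun j => FM j) = N := by
    apply le_antisymm
    · rw [Submodule.span_le]
      rintro _ ⟨j, rfl⟩
      exact hFMmem j
    · intro x hx
      exact hNle x hx
  have hgmem : ∀ i, g i ∈ N := by
    intro i
    rw [hN]
    exact Submodule.subset_span ⟨i, rfl⟩
  have hPex : ∀ i, ∃ p : Fin n → B, ∑ k, p k • FM k = g i := fun i =>
    (Submodule.mem_span_range_iff_exists_fun _).mp (by rw [hspanFM]; exact hgmem i)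
  choose P hP using hPex
  have hPFM : Matrix.of P * FM = g := by
    ext i j'
    rw [Matrix.mul_apply]
    have h20 := congrFun (hP i) j'
    rw [Finset.sum_apply] at h20
    simpa [smul_eq_mul] using h20
  have hP'ex : ∀ j, ∃ p : Fin n → B, ∑ k, p k • g k = FM j := fun j =>
    (Submodule.mem_span_range_iff_exists_fun _).mp (by rw [← hN]; exact hFMmem j)
  choose P' hP' using hP'ex
  have hP'g : Matrix.of P' * g = FM := by
    ext i j'
    rw [Matrix.mul_apply]
    have h20 := congrFun (hP' i) j'
    rw [Finset.sum_apply] at h20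
    simpa [smul_eq_mul] using h20
  have hdetdco : Matrix.det (Matrix.diagonal dco) = π ^ d := by
    rw [Matrix.det_diagonal]
    rw [show dco = fun j => Sum.elim (fun _ => π) (fun _ => (1 : B)) (ε.symm j) from rfl]
    rw [Equiv.prod_comp ε.symm (Sum.elim (fun _ => π) (fun _ => (1 : B)))]
    rw [Fintype.prod_sum_type]
    simp
  have hdetFM : FM.det = π ^ d * E.det := by rw [hFM, Matrix.det_mul, hdetdco]
  have hdetg : g.det = (Matrix.of P).det * FM.det := by rw [← hPFM, Matrix.det_mul]
  have hdetFM2 : FM.det = (Matrix.of P').det * g.det := by rw [← hP'g, Matrix.det_mul]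
  have hFMne : FM.det ≠ 0 := by
    rw [hdetFM]
    exact mul_ne_zero (pow_ne_zero _ hπ0) hEunit.ne_zero
  have hPP' : (Matrix.of P').det * (Matrix.of P).det = 1 := by
    have h21 : FM.det * ((Matrix.of P').det * (Matrix.of P).det) = FM.det * 1 := by
      rw [mul_one]
      calc FM.det * ((Matrix.of P').det * (Matrix.of P).det)
          = (Matrix.of P').det * ((Matrix.of P).det * FM.det) := by ring
        _ = (Matrix.of P').det * g.det := by rw [← hdetg]
        _ = FM.det := hdetFM2.symm
    exact mul_left_cancel₀ hFMne h21
  have hPunit : IsUnit (Matrix.of P).det :=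
    isUnit_iff_exists_inv.mpr ⟨_, (by rw [mul_comm] at hPP'; exact hPP')⟩
  refine ⟨(Matrix.of P).det * E.det, hPunit.mul hEunit, ?_⟩
  rw [hdetg, hdetFM]
  ring

/-- The dual lattice of a lattice `Λ` (given as a set) with respect to a Hermitian form `H`. -/
def hermDual (B : Type) {L V : Type} [CommRing B] [Field L] [Algebra B L]
    [AddCommGroup V] [Module L V] (H : V → V → L) (Λ : Set V) : Set V :=
  {v : V | ∀ m ∈ Λ, ∃ b : B, algebraMap B L b = H v m}

/-- `quotDim B π S Λ d` says that the quotient of (the span of) `S` by the submodule `Λ`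
has dimension `d` over the residue field `B/(π)`: there are `d` elements of `S` spanning
`S` modulo `Λ` that are linearly independent modulo `Λ` over `B/(π)`. -/
def quotDim (B : Type) {V : Type} [CommRing B] [AddCommGroup V] [Module B V]
    (π : B) (S : Set V) (Λ : Submodule B V) (d : ℕ) : Prop :=
  ∃ v : Fin d → V, (∀ i, v i ∈ S) ∧
    (∀ x ∈ S, ∃ c : Fin d → B, x - ∑ i, c i • v i ∈ Λ) ∧
    (∀ c : Fin d → B, (∑ i, c i • v i) ∈ Λ → ∀ i, c i ∈ Ideal.span {π})

set_option maxHeartbeats 2000000 in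
/-- In the unramified local situation, for a square-free lattice `Λ` with
`B`-basis `b`, the `π`-adic valuation of the Gram determinant of `H` on `b` is congruent
modulo 2 to `dim_F(Λ*/Λ)`. -/
theorem unramified_valuation_det_congr_dim
    {A K L B : Type}
    [CommRing A] [IsDomain A] [IsDiscreteValuationRing A] [CharZero A]
    [IsAdicComplete (IsLocalRing.maximalIdeal A) A]
    [Field K] [Algebra A K] [IsFractionRing A K]
    [Field L] [Algebra K L] [Algebra.IsSeparable K L]
    (hquad : Module.finrank K L = 2)
    (σ : L ≃ₐ[K] L) (hσne : σ ≠ AlgEquiv.refl) (hσ2 : ∀ x : L, σ (σ x) = x)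
    [CommRing B] [IsDomain B] [IsDiscreteValuationRing B]
    [Algebra A B] [Algebra B L] [Algebra A L]
    [IsScalarTower A B L] [IsScalarTower A K L]
    [IsIntegralClosure B A L]
    (hσB : ∀ b : B, ∃ b' : B, σ (algebraMap B L b) = algebraMap B L b')
    -- L/K is unramified: a uniformizer πA of A generates the maximal ideal of B
    (πA : A) (hπA : Ideal.span {πA} = IsLocalRing.maximalIdeal A)
    (πB : B) (hπB : πB = algebraMap A B πA)
    (hunram : Ideal.span {πB} = IsLocalRing.maximalIdeal B)
    {V : Type} [AddCommGroup V] [Module L V] [FiniteDimensional L V]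
    [Module B V] [IsScalarTower B L V]
    (H : V → V → L)
    (haddl : ∀ v v' w : V, H (v + v') w = H v w + H v' w)
    (haddr : ∀ v w w' : V, H v (w + w') = H v w + H v w')
    (hsmul : ∀ (a : L) (v w : V), H (a • v) w = a * H v w)
    (hherm : ∀ v w : V, H v w = σ (H w v))
    (hnd : ∀ v : V, (∀ w : V, H v w = 0) → v = 0)
    -- Λ is a square-free lattice with B-basis b
    (Λ : Submodule B V) (hFG : Λ.FG) (hfull : Submodule.span L (Λ : Set V) = ⊤)
    (hint : (Λ : Set V) ⊆ hermDual B H (Λ : Set V))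
    (hsf : ∀ v ∈ hermDual B H (Λ : Set V), πB • v ∈ Λ)
    (n : ℕ) (b : Module.Basis (Fin n) B Λ) :
    ∀ d : ℕ, quotDim B πB (hermDual B H (Λ : Set V)) Λ d →
      ∃ (k : ℕ) (u : B), IsUnit u ∧
        (Matrix.of fun i j : Fin n => H (b i : V) (b j : V)).det =
          algebraMap B L (u * πB ^ k) ∧
        k % 2 = d % 2 := by
  classical
  intro d hqd
  haveI : FiniteDimensional K L := Module.finite_of_finrank_eq_succ (by rw [hquad])
  haveI : IsFractionRing B L := IsIntegralClosure.isFractionRing_of_finite_extension A K L B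
  have hinj : Function.Injective (algebraMap B L) :=
    IsIntegralClosure.algebraMap_injective B A L
  set bc : Fin n → V := fun i => (b i : V) with hbc
  have hliB : LinearIndependent B bc :=
    b.linearIndependent.map' Λ.subtype (Submodule.ker_subtype _)
  have hliL : LinearIndependent L bc := (LinearIndependent.iff_fractionRing B L).mp hliB
  have hspanB : Submodule.span B (Set.range bc) = Λ := by
    have h1 := b.span_eq
    have h2 := congrArg (Submodule.map Λ.subtype) h1
    rw [Submodule.map_span, Submodule.map_top, Submodule.range_subtype] at h2
    rw [← h2]
    congr 1
    rw [← Set.range_comp]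
    rfl
  have hspanL : Submodule.span L (Set.range bc) = ⊤ := by
    rw [← top_le_iff, ← hfull, Submodule.span_le]
    intro x hx
    rw [← hspanB] at hx
    exact Submodule.span_le_restrictScalars B L _ hx
  -- additive-homomorphism packaging of H
  set Hr : V → V →+ L := fun v => AddMonoidHom.mk' (H v) (haddr v) with hHr
  set Hl : V → V →+ L := fun w => AddMonoidHom.mk' (fun v => H v w) (fun a c => haddl a c w)
    with hHl
  have hz : ∀ v : V, H v 0 = 0 := fun v => (Hr v).map_zero
  have hzl : ∀ w : V, H 0 w = 0 := fun w => (Hl w).map_zero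
  have hsmulr : ∀ (a : L) (v w : V), H v (a • w) = σ a * H v w := by
    intro a v w
    rw [hherm v (a • w), hsmul, map_mul, ← hherm]
  have hHsum_l : ∀ (k : ℕ) (c : Fin k → L) (x : Fin k → V) (y : V),
      H (∑ i, c i • x i) y = ∑ i, c i * H (x i) y := by
    intro k c x y
    rw [show H (∑ i, c i • x i) y = Hl y (∑ i, c i • x i) from rfl, map_sum]
    exact Finset.sum_congr rfl fun i _ => hsmul (c i) (x i) y
  have hHsum_r : ∀ (k : ℕ) (c : Fin k → L) (x : Fin k → V) (y : V),
      H y (∑ i, c i • x i) = ∑ i, σ (c i) * H y (x i) := by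
    intro k c x y
    rw [show H y (∑ i, c i • x i) = Hr y (∑ i, c i • x i) from rfl, map_sum]
    exact Finset.sum_congr rfl fun i _ => hsmulr (c i) y (x i)
  have hzero : ∀ v : V, (∀ j, H v (bc j) = 0) → v = 0 := by
    intro v hv
    apply hnd
    intro ww
    have hw : ww ∈ Submodule.span L (Set.range bc) := by rw [hspanL]; trivial
    induction hw using Submodule.span_induction with
    | mem x hx => obtain ⟨j, rfl⟩ := hx; exact hv j
    | zero => exact hz v
    | add x y _ _ hx hy => rw [haddr, hx, hy, add_zero]
    | smul a x _ hx => rw [hsmulr, hx, mul_zero]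
  -- the Gram matrix over B
  have hgex : ∀ i j, ∃ c : B, algebraMap B L c = H (bc i) (bc j) := fun i j =>
    hint (b i).2 (bc j) (b j).2
  choose g hgspec using hgex
  set gl : Matrix (Fin n) (Fin n) L := Matrix.of fun i j => H (bc i) (bc j) with hgl
  have hgldet : gl.det ≠ 0 := by
    intro h0
    obtain ⟨x, hx0, hx⟩ := Matrix.exists_vecMul_eq_zero_iff.mpr h0
    have h22 : ∀ j, H (∑ i, x i • bc i) (bc j) = 0 := by
      intro j
      rw [hHsum_l]
      have h23 := congrFun hx j
      simp only [Matrix.vecMul, dotProduct, Pi.zero_apply] at h23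
      rw [← h23]
      rfl
    have h24 := hzero _ h22
    have h25 := Fintype.linearIndependent_iff.mp hliL x h24
    exact hx0 (funext h25)
  have hglunit : IsUnit gl.det := isUnit_iff_ne_zero.mpr hgldet
  have hglinv : gl⁻¹ * gl = 1 := Matrix.nonsing_inv_mul gl hglunit
  set bs : Fin n → V := fun i => ∑ k, gl⁻¹ i k • bc k with hbs
  have hdual : ∀ i j, H (bs i) (bc j) = if i = j then 1 else 0 := by
    intro i j
    rw [hbs]
    rw [hHsum_l]
    have h26 : ∑ k, gl⁻¹ i k * H (bc k) (bc j) = (gl⁻¹ * gl) i j := by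
      rw [Matrix.mul_apply]
      rfl
    rw [h26, hglinv, Matrix.one_apply]
  have hrepr : ∀ v : V, v = ∑ j, H v (bc j) • bs j := by
    intro v
    have hv : ∀ j, H (v - ∑ k, H v (bc k) • bs k) (bc j) = 0 := by
      intro j
      rw [show H (v - ∑ k, H v (bc k) • bs k) (bc j)
          = Hl (bc j) (v - ∑ k, H v (bc k) • bs k) from rfl, map_sub]
      rw [show Hl (bc j) (∑ k, H v (bc k) • bs k) = H (∑ k, H v (bc k) • bs k) (bc j) from rfl]
      rw [hHsum_l]
      simp only [hdual, mul_ite, mul_one, mul_zero]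
      rw [Finset.sum_ite_eq' Finset.univ j (fun k => H v (bc k))]
      simp only [Finset.mem_univ, if_true]
      exact sub_self _
    have h27 := hzero _ hv
    rw [sub_eq_zero] at h27
    exact h27
  -- the dual lattice as a submodule
  set Λd : Submodule B V :=
    { carrier := hermDual B H (Λ : Set V)
      add_mem' := by
        rintro x y hx hy m hm
        obtain ⟨cx, hcx⟩ := hx m hm
        obtain ⟨cy, hcy⟩ := hy m hm
        exact ⟨cx + cy, by rw [map_add, hcx, hcy, haddl]⟩
      zero_mem' := fun m hm => ⟨0, by rw [map_zero, hzl]⟩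
      smul_mem' := by
        rintro c x hx m hm
        obtain ⟨e, he⟩ := hx m hm
        refine ⟨c * e, ?_⟩
        rw [map_mul, he, ← hsmul, algebraMap_smul] } with hΛd
  have hbsmem : ∀ i, bs i ∈ hermDual B H (Λ : Set V) := by
    intro i m hm
    have hm' : m = ∑ j, (algebraMap B L (b.repr ⟨m, hm⟩ j)) • bc j := by
      have h5 := b.sum_repr ⟨m, hm⟩
      have h6 := congrArg Λ.subtype h5
      simp only [map_sum, _root_.map_smul, Submodule.coe_subtype] at h6
      have h7 : ∑ j, (algebraMap B L (b.repr ⟨m, hm⟩ j)) • bc j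
          = ∑ j, (b.repr ⟨m, hm⟩ j) • bc j :=
        Finset.sum_congr rfl fun j _ => algebraMap_smul L _ _
      rw [h7]
      exact h6.symm
    rw [hm', hHsum_r]
    simp only [hdual, mul_ite, mul_one, mul_zero]
    rw [Finset.sum_ite_eq Finset.univ i (fun j => σ (algebraMap B L (b.repr ⟨m, hm⟩ j)))]
    simp only [Finset.mem_univ, if_true]
    obtain ⟨c', hc'⟩ := hσB (b.repr ⟨m, hm⟩ i)
    exact ⟨c', hc'.symm⟩
  -- the coordinate map
  set τl : (Fin n → B) →ₗ[B] V :=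
    { toFun := fun x => ∑ j, x j • bs j
      map_add' := by
        intro x y
        simp only [Pi.add_apply, add_smul, Finset.sum_add_distrib]
      map_smul' := by
        intro c x
        simp only [Pi.smul_apply, smul_eq_mul, mul_smul, RingHom.id_apply, Finset.smul_sum] } with hτl
  have hτH : ∀ (x : Fin n → B) (j : Fin n), H (τl x) (bc j) = algebraMap B L (x j) := by
    intro x j
    show H (∑ k, x k • bs k) (bc j) = _
    have h30 : ∑ k, x k • bs k = ∑ k, (algebraMap B L (x k)) • bs k :=
      Finset.sum_congr rfl fun k _ => (algebraMap_smul L _ _).symm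
    rw [h30, hHsum_l]
    simp only [hdual, mul_ite, mul_one, mul_zero]
    rw [Finset.sum_ite_eq' Finset.univ j (fun k => algebraMap B L (x k))]
    simp only [Finset.mem_univ, if_true]
  have hτinj : Function.Injective τl := by
    intro x y hxy
    funext j
    apply hinj
    rw [← hτH x j, ← hτH y j, hxy]
  have hτg : ∀ i, τl (g i) = bc i := by
    intro i
    show ∑ j, g i j • bs j = bc i
    conv_rhs => rw [hrepr (bc i)]
    exact Finset.sum_congr rfl fun j _ => by rw [← hgspec i j, algebraMap_smul]
  have hτmem : ∀ x : Fin n → B, τl x ∈ hermDual B H (Λ : Set V) := by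
    intro x
    have h29 : (∑ j, x j • bs j) ∈ Λd :=
      Submodule.sum_mem Λd fun j _ => Λd.smul_mem (x j) (hbsmem j)
    exact h29
  set N : Submodule B (Fin n → B) :=
    Submodule.span B (Set.range fun i => (Matrix.of g) i) with hNdef
  have hτN : ∀ x : Fin n → B, (τl x ∈ Λ ↔ x ∈ N) := by
    intro x
    constructor
    · intro hx
      set c : Fin n → B := fun j => b.repr ⟨τl x, hx⟩ j with hcdef
      have h31 : τl x = ∑ j, c j • bc j := by
        have h5 := b.sum_repr ⟨τl x, hx⟩
        have h6 := congrArg Λ.subtype h5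
        simp only [map_sum, _root_.map_smul, Submodule.coe_subtype] at h6
        exact h6.symm
      have h32 : τl x = τl (∑ j, c j • g j) := by
        rw [map_sum]
        simp only [map_smul]
        rw [h31]
        exact Finset.sum_congr rfl fun j _ => by rw [hτg]
      have h33 := hτinj h32
      rw [h33]
      exact Submodule.sum_mem _ fun j _ =>
        Submodule.smul_mem _ _ (Submodule.subset_span ⟨j, rfl⟩)
    · intro hx
      obtain ⟨c, hc⟩ := (Submodule.mem_span_range_iff_exists_fun _).mp hx
      rw [← hc, map_sum]
      simp only [map_smul]
      refine Submodule.sum_mem _ fun j _ => Submodule.smul_mem _ _ ?_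
      show τl (g j) ∈ Λ
      rw [hτg]
      exact (b j).2
  -- transfer the quotDim data
  obtain ⟨vv, hvmem, hvspan, hvind⟩ := hqd
  have hvcoef : ∀ i, ∃ xw : Fin n → B, τl xw = vv i := by
    intro i
    choose c hc using fun j => hvmem i (bc j) (b j).2
    refine ⟨c, ?_⟩
    show ∑ j, c j • bs j = vv i
    conv_rhs => rw [hrepr (vv i)]
    exact Finset.sum_congr rfl fun j _ => by rw [← hc j, algebraMap_smul]
  choose xw hxw using hvcoef
  have hπN : ∀ x : Fin n → B, πB • x ∈ N := by
    intro x
    have h34 := hsf (τl x) (hτmem x)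
    have h35 : τl (πB • x) ∈ Λ := by rw [map_smul]; exact h34
    exact (hτN _).mp h35
  have hspan' : ∀ x : Fin n → B, ∃ c : Fin d → B, x - ∑ i, c i • xw i ∈ N := by
    intro x
    obtain ⟨c, hc⟩ := hvspan (τl x) (hτmem x)
    refine ⟨c, (hτN _).mp ?_⟩
    rw [map_sub, map_sum]
    simp only [map_smul, hxw]
    exact hc
  have hind' : ∀ c : Fin d → B, (∑ i, c i • xw i) ∈ N → ∀ i, c i ∈ Ideal.span {πB} := by
    intro c hc
    apply hvind
    have h36 := (hτN _).mpr hc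
    rw [map_sum] at h36
    simp only [map_smul, hxw] at h36
    exact h36
  obtain ⟨u, huunit, hudet⟩ :=
    matrix_det_eq_unit_mul_pow πB hunram (Matrix.of g) N hNdef hπN xw hspan' hind'
  refine ⟨d, u, huunit, ?_, rfl⟩
  have h37 : gl = (Matrix.of g).map (algebraMap B L) := by
    ext i j
    exact (hgspec i j).symm
  rw [h37]
  have h38 := RingHom.map_det (algebraMap B L) (Matrix.of g)
  rw [RingHom.mapMatrix_apply] at h38
  rw [← h38, hudet]
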